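/- Let k > 1 and let D be a (q^{init}_k, v₀)-rooted {q^{leaf}}-leaf-covering deduction tree of the BVASS B_k, where v₀(d_i) = v₀(d′_i) = 0 for all i < k. Then for each h with 0 < h ≤ tower(k−1), D contains 2^h pairwise incomparable nodes (none an ancestor of another) whose state label is q^{loop}_k and at which the value of d_{k−1} + d′_{k−1} is at most h. -/
import Mathlib


/-- An alternating branching VASS with full zero tests (ABVASS₀):
states `Q`, counters indexed by `ι`, with unary, fork, split, and
full-zero-test rules. -/
structure ABVASS (Q ι : Type) where
  Tu : Set (Q × (ι → ℤ) × Q)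
  Tf : Set (Q × Q × Q)
  Ts : Set (Q × Q × Q)
  Tz : Set (Q × Q)

/-- Configurations: a state together with a vector of naturals. -/
abbrev Config (Q ι : Type) := Q × (ι → ℕ)

/-- Finite deduction trees labelled by configurations, with unary and
binary internal nodes. -/
inductive DTree (Q ι : Type) where
  | leaf : Config Q ι → DTree Q ι
  | node1 : Config Q ι → DTree Q ι → DTree Q ι
  | node2 : Config Q ι → DTree Q ι → DTree Q ι → DTree Q ι

namespace DTree

variable {Q ι : Type}

/-- The root label of a deduction tree. -/
def root : DTree Q ι → Config Q ι
  | .leaf c => c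
  | .node1 c _ => c
  | .node2 c _ _ => c

/-- Height: the maximum number of edges from the root to a leaf. -/
def height : DTree Q ι → ℕ
  | .leaf _ => 0
  | .node1 _ t => t.height + 1
  | .node2 _ t₁ t₂ => max t₁.height t₂.height + 1

/-- The list of leaf labels. -/
def leaves : DTree Q ι → List (Config Q ι)
  | .leaf c => [c]
  | .node1 _ t => t.leaves
  | .node2 _ t₁ t₂ => t₁.leaves ++ t₂.leaves

end DTree

variable {Q ι : Type}

/-- Unary rule, applied top-down: from `(q, v)` derive `(q₁, v + u)`,
provided `v + u` is non-negative. -/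
def UnaryStep (A : ABVASS Q ι) (c c' : Config Q ι) : Prop :=
  ∃ u, (c.1, u, c'.1) ∈ A.Tu ∧ ∀ i, (c'.2 i : ℤ) = (c.2 i : ℤ) + u i

/-- Full zero test: from `(q, 0)` derive `(q₁, 0)`. -/
def ZeroStep (A : ABVASS Q ι) (c c' : Config Q ι) : Prop :=
  (c.1, c'.1) ∈ A.Tz ∧ c.2 = (fun _ => 0) ∧ c'.2 = (fun _ => 0)

/-- Fork (children copy the parent's vector) or split (the parent's
vector is a sum of the children's). -/
def BinStep (A : ABVASS Q ι) (c c₁ c₂ : Config Q ι) : Prop :=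
  ((c.1, c₁.1, c₂.1) ∈ A.Tf ∧ c₁.2 = c.2 ∧ c₂.2 = c.2) ∨
  ((c.1, c₁.1, c₂.1) ∈ A.Ts ∧ c.2 = c₁.2 + c₂.2)

/-- A tree is a valid deduction tree when every internal node's children
are obtained by one of the permitted steps. -/
inductive ValidTree (step1 : Config Q ι → Config Q ι → Prop)
    (step2 : Config Q ι → Config Q ι → Config Q ι → Prop) : DTree Q ι → Prop
  | leaf (c : Config Q ι) : ValidTree step1 step2 (.leaf c)
  | one {c : Config Q ι} {t : DTree Q ι} :
      step1 c t.root → ValidTree step1 step2 t → ValidTree step1 step2 (.node1 c t)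
  | two {c : Config Q ι} {t₁ t₂ : DTree Q ι} :
      step2 c t₁.root t₂.root → ValidTree step1 step2 t₁ → ValidTree step1 step2 t₂ →
      ValidTree step1 step2 (.node2 c t₁ t₂)

/-- Deduction trees of an ABVASS₀ (standard semantics). -/
def IsDeduction (A : ABVASS Q ι) : DTree Q ι → Prop :=
  ValidTree (fun c c' => UnaryStep A c c' ∨ ZeroStep A c c') (BinStep A)

/-- `tower 0 = 1`, `tower (n+1) = 2 ^ tower n`. -/
def tower : ℕ → ℕ
  | 0 => 1
  | n + 1 => 2 ^ tower n

/-- States of the BVASS hierarchy `B_k`. -/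
inductive BSt where
  | qinit : ℕ → BSt
  | q1 : ℕ → BSt
  | q2 : ℕ → BSt
  | qloop : ℕ → BSt
  | qleaf : BSt
deriving DecidableEq

/-- Counters: `Sum.inl i` is `d_i` and `Sum.inr i` is `d'_i` (for `i ≥ 1`). -/
abbrev Cnt := ℕ ⊕ ℕ

/-- The unit vector on counter `c`. -/
def e (c : Cnt) : Cnt → ℤ := fun c' => if c' = c then 1 else 0

/-- The BVASS `B_k`: `B_1` has the single unary rule
`qinit 1 →^{-2 e_{d_1}} qleaf`; for `2 ≤ j ≤ k` we add the unary rules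
`qinit j →^{+e_{d_{j-1}}} q1 j`, `q1 j →^{-e_{d_{j-1}} + 2 e_{d'_{j-1}}} q1 j`,
`q1 j →^0 q2 j`, `q2 j →^{-e_{d'_{j-1}} + e_{d_{j-1}}} q2 j`,
`qloop j →^0 qinit j`, `qloop j →^{-e_{d_j}} qinit (j-1)`, and the split
rule `q2 j → qloop j + qloop j`. -/
def Bsys (k : ℕ) : ABVASS BSt Cnt where
  Tu := {r | r = (BSt.qinit 1, -(2 • e (Sum.inl 1)), BSt.qleaf) ∨
    ∃ j, 2 ≤ j ∧ j ≤ k ∧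
      (r = (BSt.qinit j, e (Sum.inl (j - 1)), BSt.q1 j) ∨
       r = (BSt.q1 j, -e (Sum.inl (j - 1)) + 2 • e (Sum.inr (j - 1)), BSt.q1 j) ∨
       r = (BSt.q1 j, 0, BSt.q2 j) ∨
       r = (BSt.q2 j, -e (Sum.inr (j - 1)) + e (Sum.inl (j - 1)), BSt.q2 j) ∨
       r = (BSt.qloop j, 0, BSt.qinit j) ∨
       r = (BSt.qloop j, -e (Sum.inl j), BSt.qinit (j - 1)))}
  Tf := ∅
  Ts := {r | ∃ j, 2 ≤ j ∧ j ≤ k ∧ r = (BSt.q2 j, BSt.qloop j, BSt.qloop j)}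
  Tz := ∅

/-- The subtree at a node, identified by a path from the root:
`false` selects the (first) child, `true` the second child. -/
def subtreeAt {Q ι : Type} : DTree Q ι → List Bool → Option (DTree Q ι)
  | t, [] => some t
  | .leaf _, _ :: _ => none
  | .node1 _ t, false :: p => subtreeAt t p
  | .node1 _ _, true :: _ => none
  | .node2 _ t₁ _, false :: p => subtreeAt t₁ p
  | .node2 _ _ t₂, true :: p => subtreeAt t₂ p

/-- Two nodes (paths) are incomparable when neither is an ancestor of
(i.e. a prefix of) the other. -/
def Incomparable (p₁ p₂ : List Bool) : Prop := ¬ p₁ <+: p₂ ∧ ¬ p₂ <+: p₁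


/-! ### Auxiliary material for the proof -/

section BkAux

open BSt

/-- Value of `e` at its own coordinate. -/
lemma e_same (a : Cnt) : e a a = 1 := by simp [e]

/-- Value of `e` at a different coordinate. -/
lemma e_ne {a b : Cnt} (h : b ≠ a) : e a b = 0 := by simp [e, h]

lemma tu_unary {k : ℕ} {c c' : Config BSt Cnt}
    (hs : UnaryStep (Bsys k) c c' ∨ ZeroStep (Bsys k) c c') :
    ∃ u, (c.1, u, c'.1) ∈ (Bsys k).Tu ∧ ∀ i, (c'.2 i : ℤ) = (c.2 i : ℤ) + u i := by
  rcases hs with ⟨u, hu, hv⟩ | ⟨hz, -⟩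
  · exact ⟨u, hu, hv⟩
  · exact absurd hz (by simp [Bsys])

lemma bin_split {k : ℕ} {c c₁ c₂ : Config BSt Cnt} (hs : BinStep (Bsys k) c c₁ c₂) :
    ∃ m, 2 ≤ m ∧ m ≤ k ∧ c.1 = BSt.q2 m ∧ c₁.1 = BSt.qloop m ∧ c₂.1 = BSt.qloop m ∧
      ∀ i, c.2 i = c₁.2 i + c₂.2 i := by
  rcases hs with ⟨hf, -⟩ | ⟨hsp, hv⟩
  · exact absurd hf (by simp [Bsys])
  · simp only [Bsys, Set.mem_setOf_eq, Prod.mk.injEq] at hsp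
    obtain ⟨m, h2, hmk, h₁, h₂, h₃⟩ := hsp
    exact ⟨m, h2, hmk, h₁, h₂, h₃, fun i => congrFun hv i⟩

lemma inv_init1 {k : ℕ} {u : Cnt → ℤ} {q' : BSt}
    (h : (BSt.qinit 1, u, q') ∈ (Bsys k).Tu) :
    q' = BSt.qleaf ∧ u = -(2 • e (Sum.inl 1)) := by
  simp only [Bsys, Set.mem_setOf_eq, Prod.mk.injEq] at h
  rcases h with ⟨-, h2, h3⟩ | ⟨j, hj2, hjk, H⟩
  · exact ⟨h3, h2⟩
  · rcases H with ⟨h1, -, -⟩ | ⟨h1, -, -⟩ | ⟨h1, -, -⟩ | ⟨h1, -, -⟩ | ⟨h1, -, -⟩ | ⟨h1, -, -⟩ <;>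
      first
        | (rw [BSt.qinit.injEq] at h1; omega)
        | exact absurd h1 (by simp)

lemma inv_init {k m : ℕ} {u : Cnt → ℤ} {q' : BSt} (hm : 2 ≤ m)
    (h : (BSt.qinit m, u, q') ∈ (Bsys k).Tu) :
    m ≤ k ∧ q' = BSt.q1 m ∧ u = e (Sum.inl (m - 1)) := by
  simp only [Bsys, Set.mem_setOf_eq, Prod.mk.injEq] at h
  rcases h with ⟨h1, -, -⟩ | ⟨j, hj2, hjk, H⟩
  · rw [BSt.qinit.injEq] at h1; omega
  · rcases H with ⟨h1, h2, h3⟩ | ⟨h1, -, -⟩ | ⟨h1, -, -⟩ | ⟨h1, -, -⟩ | ⟨h1, -, -⟩ | ⟨h1, -, -⟩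
    · rw [BSt.qinit.injEq] at h1; subst h1; exact ⟨hjk, h3, h2⟩
    all_goals exact absurd h1 (by simp)

lemma inv_q1 {k m : ℕ} {u : Cnt → ℤ} {q' : BSt}
    (h : (BSt.q1 m, u, q') ∈ (Bsys k).Tu) :
    (q' = BSt.q1 m ∧ u = -e (Sum.inl (m - 1)) + 2 • e (Sum.inr (m - 1))) ∨
    (q' = BSt.q2 m ∧ u = 0) := by
  simp only [Bsys, Set.mem_setOf_eq, Prod.mk.injEq] at h
  rcases h with ⟨h1, -, -⟩ | ⟨j, hj2, hjk, H⟩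
  · exact absurd h1 (by simp)
  · rcases H with ⟨h1, -, -⟩ | ⟨h1, h2, h3⟩ | ⟨h1, h2, h3⟩ | ⟨h1, -, -⟩ | ⟨h1, -, -⟩ | ⟨h1, -, -⟩
    · exact absurd h1 (by simp)
    · rw [BSt.q1.injEq] at h1; subst h1; exact Or.inl ⟨h3, h2⟩
    · rw [BSt.q1.injEq] at h1; subst h1; exact Or.inr ⟨h3, h2⟩
    all_goals exact absurd h1 (by simp)

lemma inv_q2 {k m : ℕ} {u : Cnt → ℤ} {q' : BSt}
    (h : (BSt.q2 m, u, q') ∈ (Bsys k).Tu) :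
    q' = BSt.q2 m ∧ u = -e (Sum.inr (m - 1)) + e (Sum.inl (m - 1)) := by
  simp only [Bsys, Set.mem_setOf_eq, Prod.mk.injEq] at h
  rcases h with ⟨h1, -, -⟩ | ⟨j, hj2, hjk, H⟩
  · exact absurd h1 (by simp)
  · rcases H with ⟨h1, -, -⟩ | ⟨h1, -, -⟩ | ⟨h1, -, -⟩ | ⟨h1, h2, h3⟩ | ⟨h1, -, -⟩ | ⟨h1, -, -⟩
    · exact absurd h1 (by simp)
    · exact absurd h1 (by simp)
    · exact absurd h1 (by simp)
    · rw [BSt.q2.injEq] at h1; subst h1; exact ⟨h3, h2⟩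
    all_goals exact absurd h1 (by simp)

lemma inv_qloop {k m : ℕ} {u : Cnt → ℤ} {q' : BSt}
    (h : (BSt.qloop m, u, q') ∈ (Bsys k).Tu) :
    (q' = BSt.qinit m ∧ u = 0) ∨ (q' = BSt.qinit (m - 1) ∧ u = -e (Sum.inl m)) := by
  simp only [Bsys, Set.mem_setOf_eq, Prod.mk.injEq] at h
  rcases h with ⟨h1, -, -⟩ | ⟨j, hj2, hjk, H⟩
  · exact absurd h1 (by simp)
  · rcases H with ⟨h1, -, -⟩ | ⟨h1, -, -⟩ | ⟨h1, -, -⟩ | ⟨h1, -, -⟩ | ⟨h1, h2, h3⟩ | ⟨h1, h2, h3⟩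
    · exact absurd h1 (by simp)
    · exact absurd h1 (by simp)
    · exact absurd h1 (by simp)
    · exact absurd h1 (by simp)
    · rw [BSt.qloop.injEq] at h1; subst h1; exact Or.inl ⟨h3, h2⟩
    · rw [BSt.qloop.injEq] at h1; subst h1; exact Or.inr ⟨h3, h2⟩


lemma not_prefix_append {p p' q q' : List Bool} (h1 : ¬ p <+: p') (h2 : ¬ p' <+: p) :
    ¬ (p ++ q) <+: (p' ++ q') := by
  intro hpre
  have hp : p <+: p' ++ q' := (p.prefix_append q).trans hpre
  rcases List.prefix_or_prefix_of_prefix hp (p'.prefix_append q') with h | h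
  · exact h1 h
  · exact h2 h

lemma incomp_append₂ {p p' q q' : List Bool} (h : Incomparable p p') :
    Incomparable (p ++ q) (p' ++ q') :=
  ⟨not_prefix_append h.1 h.2, not_prefix_append h.2 h.1⟩

lemma incomp_append₁ {q q' : List Bool} (p : List Bool) (h : Incomparable q q') :
    Incomparable (p ++ q) (p ++ q') := by
  refine ⟨?_, ?_⟩ <;> rw [List.prefix_append_right_inj]
  · exact h.1
  · exact h.2

lemma incomp_cons {q q' : List Bool} (b : Bool) (h : Incomparable q q') :
    Incomparable (b :: q) (b :: q') := incomp_append₁ [b] h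

lemma incomp_ne {p p' : List Bool} (h : Incomparable p p') : p ≠ p' := by
  rintro rfl; exact h.1 (List.prefix_refl p)

lemma incomp_singletons : Incomparable [false] [true] := by
  constructor <;> · rintro ⟨l, hl⟩; simp at hl

lemma subtreeAt_append {Q ι : Type} (p q : List Bool) (t : DTree Q ι) :
    subtreeAt t (p ++ q) = (subtreeAt t p).bind (fun t' => subtreeAt t' q) := by
  induction p generalizing t with
  | nil => simp [subtreeAt]
  | cons b p IH =>
    cases t with
    | leaf c => cases b <;> simp [subtreeAt]
    | node1 c t => cases b <;> simp [subtreeAt, IH]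
    | node2 c t₁ t₂ => cases b <;> simp [subtreeAt, IH]

lemma pow2_split (T v₁ v₂ : ℕ) :
    2 ^ (T + 1 - (v₁ + v₂ + 1) / 2) ≤ 2 ^ (T - v₁) + 2 ^ (T - v₂) := by
  rcases le_total v₁ v₂ with hv | hv
  · rcases le_or_gt v₂ (v₁ + 1) with h2 | h2
    · calc 2 ^ (T + 1 - (v₁ + v₂ + 1) / 2) ≤ 2 ^ (T - v₂ + 1) :=
            Nat.pow_le_pow_right (by norm_num) (by omega)
        _ = 2 ^ (T - v₂) + 2 ^ (T - v₂) := by ring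
        _ ≤ 2 ^ (T - v₁) + 2 ^ (T - v₂) := by
            have := Nat.pow_le_pow_right (show 1 ≤ 2 by norm_num) (show T - v₂ ≤ T - v₁ by omega)
            omega
    · calc 2 ^ (T + 1 - (v₁ + v₂ + 1) / 2) ≤ 2 ^ (T - v₁) :=
            Nat.pow_le_pow_right (by norm_num) (by omega)
        _ ≤ _ := Nat.le_add_right _ _
  · rcases le_or_gt v₁ (v₂ + 1) with h2 | h2
    · calc 2 ^ (T + 1 - (v₁ + v₂ + 1) / 2) ≤ 2 ^ (T - v₁ + 1) :=
            Nat.pow_le_pow_right (by norm_num) (by omega)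
        _ = 2 ^ (T - v₁) + 2 ^ (T - v₁) := by ring
        _ ≤ 2 ^ (T - v₁) + 2 ^ (T - v₂) := by
            have := Nat.pow_le_pow_right (show 1 ≤ 2 by norm_num) (show T - v₁ ≤ T - v₂ by omega)
            omega
    · calc 2 ^ (T + 1 - (v₁ + v₂ + 1) / 2) ≤ 2 ^ (T - v₂) :=
            Nat.pow_le_pow_right (by norm_num) (by omega)
        _ ≤ _ := Nat.le_add_left _ _

lemma L1 {k : ℕ} (t : DTree BSt Cnt) (hD : IsDeduction (Bsys k) t)
    (hcov : ∀ l ∈ t.leaves, l.1 = BSt.qleaf) (hq : t.root.1 = BSt.qinit 1) :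
    2 ≤ t.root.2 (Sum.inl 1) := by
  cases t with
  | leaf c =>
    have := hcov c (by simp [DTree.leaves])
    rw [show c.1 = BSt.qinit 1 from hq] at this
    exact absurd this (by simp)
  | node1 c t =>
    cases hD with | one hstep hval =>
    obtain ⟨u, hu, hv⟩ := tu_unary hstep
    rw [show c.1 = BSt.qinit 1 from hq] at hu
    obtain ⟨-, hu⟩ := inv_init1 hu
    subst hu
    have h1 := hv (Sum.inl 1)
    simp only [Pi.neg_apply, Pi.smul_apply, e_same, smul_eq_mul] at h1
    have : (t.root.2 (Sum.inl 1) : ℤ) = (c.2 (Sum.inl 1) : ℤ) - 2 := by rw [h1]; ring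
    show 2 ≤ c.2 (Sum.inl 1)
    omega
  | node2 c t₁ t₂ =>
    cases hD with | two hstep h1 h2 =>
    obtain ⟨m, -, -, hcm, -⟩ := bin_split hstep
    rw [show c.1 = BSt.qinit 1 from hq] at hcm
    exact absurd hcm (by simp)

lemma budget {k : ℕ} : ∀ j, 2 ≤ j → j ≤ k → ∀ t : DTree BSt Cnt,
    IsDeduction (Bsys k) t → (∀ l ∈ t.leaves, l.1 = BSt.qleaf) →
    (∀ i, 1 ≤ i → i + 2 ≤ j → t.root.2 (Sum.inl i) = 0 ∧ t.root.2 (Sum.inr i) = 0) →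
    (((t.root.1 = BSt.qinit j ∨ t.root.1 = BSt.qloop j) →
        2 ^ (tower (j-1) - (t.root.2 (Sum.inl (j-1)) + t.root.2 (Sum.inr (j-1)))) ≤
          t.root.2 (Sum.inl j)) ∧
     (t.root.1 = BSt.q1 j →
        2 ^ (tower (j-1) + 1 - t.root.2 (Sum.inl (j-1)) - (t.root.2 (Sum.inr (j-1)) + 1)/2) ≤
          t.root.2 (Sum.inl j)) ∧
     (t.root.1 = BSt.q2 j →
        2 ^ (tower (j-1) + 1 - (t.root.2 (Sum.inl (j-1)) + t.root.2 (Sum.inr (j-1)) + 1)/2) ≤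
          t.root.2 (Sum.inl j))) := by
  intro j
  induction j using Nat.strong_induction_on with
  | _ j IHj =>
  intro hj2 hjk t
  induction t with
  | leaf c =>
    intro hD hcov hz
    have hc : c.1 = BSt.qleaf := hcov c (by simp [DTree.leaves])
    refine ⟨?_, ?_, ?_⟩
    · rintro (hq | hq) <;> (simp only [DTree.root] at hq; rw [hc] at hq; simp at hq)
    · intro hq; simp only [DTree.root] at hq; rw [hc] at hq; simp at hq
    · intro hq; simp only [DTree.root] at hq; rw [hc] at hq; simp at hq
  | node1 c t IH =>
    intro hD hcov hz
    simp only [DTree.root] at hz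
    cases hD with | one hstep hval =>
    obtain ⟨u, hu, hv⟩ := tu_unary hstep
    have hcov' : ∀ l ∈ t.leaves, l.1 = BSt.qleaf := hcov
    have hne_jl : (Sum.inl j : Cnt) ≠ Sum.inl (j-1) := by simp; omega
    have hne_jr : (Sum.inl j : Cnt) ≠ Sum.inr (j-1) := by simp
    have hne_rl : (Sum.inr (j-1) : Cnt) ≠ Sum.inl (j-1) := by simp
    have hne_lr : (Sum.inl (j-1) : Cnt) ≠ Sum.inr (j-1) := by simp
    refine ⟨?_, ?_, ?_⟩
    · rintro (hq | hq)
      · -- qinit j → q1 j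
        show 2 ^ (tower (j-1) - (c.2 (Sum.inl (j-1)) + c.2 (Sum.inr (j-1)))) ≤ c.2 (Sum.inl j)
        rw [show (DTree.node1 c t).root.1 = c.1 from rfl] at hq
        rw [hq] at hu
        obtain ⟨-, hq', hu⟩ := inv_init hj2 hu
        subst hu
        have ea := hv (Sum.inl (j-1)); rw [e_same] at ea
        have eb := hv (Sum.inr (j-1)); rw [e_ne hne_rl] at eb
        have en := hv (Sum.inl j); rw [e_ne hne_jl] at en
        have hz' : ∀ i, 1 ≤ i → i + 2 ≤ j →
            t.root.2 (Sum.inl i) = 0 ∧ t.root.2 (Sum.inr i) = 0 := by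
          intro i h1 h2
          have e1 := hv (Sum.inl i)
          rw [e_ne (show (Sum.inl i : Cnt) ≠ Sum.inl (j-1) by simp; omega)] at e1
          have e2 := hv (Sum.inr i)
          rw [e_ne (show (Sum.inr i : Cnt) ≠ Sum.inl (j-1) by simp)] at e2
          have := hz i h1 h2
          constructor <;> omega
        have hclaim := (IH hval hcov' hz').2.1 hq'
        have ea' : t.root.2 (Sum.inl (j-1)) = c.2 (Sum.inl (j-1)) + 1 := by omega
        have eb' : t.root.2 (Sum.inr (j-1)) = c.2 (Sum.inr (j-1)) := by omega
        have en' : t.root.2 (Sum.inl j) = c.2 (Sum.inl j) := by omega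
        rw [ea', eb', en'] at hclaim
        exact le_trans (Nat.pow_le_pow_right (by norm_num) (by omega)) hclaim
      · -- qloop j
        show 2 ^ (tower (j-1) - (c.2 (Sum.inl (j-1)) + c.2 (Sum.inr (j-1)))) ≤ c.2 (Sum.inl j)
        rw [show (DTree.node1 c t).root.1 = c.1 from rfl] at hq
        rw [hq] at hu
        rcases inv_qloop hu with ⟨hq', hu⟩ | ⟨hq', hu⟩
        · -- restart
          subst hu
          have heq : ∀ i, t.root.2 i = c.2 i := by
            intro i; have := hv i; simp only [Pi.zero_apply, add_zero] at this; omega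
          have hz' : ∀ i, 1 ≤ i → i + 2 ≤ j →
              t.root.2 (Sum.inl i) = 0 ∧ t.root.2 (Sum.inr i) = 0 := by
            intro i h1 h2; rw [heq, heq]; exact hz i h1 h2
          have hclaim := (IH hval hcov' hz').1 (Or.inl hq')
          rw [heq, heq, heq] at hclaim
          exact hclaim
        · -- descend
          subst hu
          have ea := hv (Sum.inl (j-1))
          simp only [Pi.neg_apply, e_ne (Ne.symm hne_jl), neg_zero, add_zero] at ea
          have eb := hv (Sum.inr (j-1))
          simp only [Pi.neg_apply, e_ne (Ne.symm hne_jr), neg_zero, add_zero] at eb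
          have en := hv (Sum.inl j)
          simp only [Pi.neg_apply, e_same] at en
          have hn1 : 1 ≤ c.2 (Sum.inl j) := by omega
          have hage : tower (j-1) ≤ t.root.2 (Sum.inl (j-1)) := by
            rcases Nat.lt_or_ge j 3 with h3 | h3
            · -- j = 2
              have hj : j = 2 := by omega
              subst hj
              have := L1 t hval hcov' hq'
              simpa [tower] using this
            · -- j ≥ 3
              have hz'' : ∀ i, 1 ≤ i → i + 2 ≤ j - 1 →
                  t.root.2 (Sum.inl i) = 0 ∧ t.root.2 (Sum.inr i) = 0 := by
                intro i h1 h2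
                have e1 := hv (Sum.inl i)
                simp only [Pi.neg_apply,
                  e_ne (show (Sum.inl i : Cnt) ≠ Sum.inl j by simp; omega),
                  neg_zero, add_zero] at e1
                have e2 := hv (Sum.inr i)
                simp only [Pi.neg_apply,
                  e_ne (show (Sum.inr i : Cnt) ≠ Sum.inl j by simp),
                  neg_zero, add_zero] at e2
                have := hz i h1 (by omega)
                constructor <;> omega
              have hclaim := (IHj (j-1) (by omega) (by omega) (by omega) t hval hcov' hz'').1
                (Or.inl hq')
              have z1 := hv (Sum.inl (j-2))
              simp only [Pi.neg_apply,
                e_ne (show (Sum.inl (j-2) : Cnt) ≠ Sum.inl j by simp; omega),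
                neg_zero, add_zero] at z1
              have z2 := hv (Sum.inr (j-2))
              simp only [Pi.neg_apply,
                e_ne (show (Sum.inr (j-2) : Cnt) ≠ Sum.inl j by simp),
                neg_zero, add_zero] at z2
              have hz2 := hz (j-2) (by omega) (by omega)
              rw [show j - 1 - 1 = j - 2 by omega] at hclaim
              have w1 : t.root.2 (Sum.inl (j-2)) = 0 := by omega
              have w2 : t.root.2 (Sum.inr (j-2)) = 0 := by omega
              rw [w1, w2] at hclaim
              simp only [Nat.add_zero, Nat.sub_zero] at hclaim
              have htw : tower (j-1) = 2 ^ (tower (j-2)) := by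
                rw [show j - 1 = (j - 2) + 1 by omega]
                rfl
              rw [htw]
              exact hclaim
          have : tower (j-1) - (c.2 (Sum.inl (j-1)) + c.2 (Sum.inr (j-1))) = 0 := by omega
          rw [this]
          simpa using hn1
    · -- q1 j
      intro hq
      show 2 ^ (tower (j-1) + 1 - c.2 (Sum.inl (j-1)) - (c.2 (Sum.inr (j-1)) + 1)/2) ≤
        c.2 (Sum.inl j)
      rw [show (DTree.node1 c t).root.1 = c.1 from rfl] at hq
      rw [hq] at hu
      rcases inv_q1 hu with ⟨hq', hu⟩ | ⟨hq', hu⟩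
      · -- q1 loop
        subst hu
        have ea := hv (Sum.inl (j-1))
        simp only [Pi.add_apply, Pi.neg_apply, Pi.smul_apply, Pi.mul_apply, smul_eq_mul, nsmul_eq_mul, Nat.cast_ofNat, Pi.ofNat_apply, e_same,
          e_ne hne_lr] at ea
        have eb := hv (Sum.inr (j-1))
        simp only [Pi.add_apply, Pi.neg_apply, Pi.smul_apply, Pi.mul_apply, smul_eq_mul, nsmul_eq_mul, Nat.cast_ofNat, Pi.ofNat_apply, e_same,
          e_ne hne_rl] at eb
        have en := hv (Sum.inl j)
        simp only [Pi.add_apply, Pi.neg_apply, Pi.smul_apply, Pi.mul_apply, smul_eq_mul, nsmul_eq_mul, Nat.cast_ofNat, Pi.ofNat_apply,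
          e_ne hne_jl, e_ne hne_jr] at en
        have hz' : ∀ i, 1 ≤ i → i + 2 ≤ j →
            t.root.2 (Sum.inl i) = 0 ∧ t.root.2 (Sum.inr i) = 0 := by
          intro i h1 h2
          have e1 := hv (Sum.inl i)
          simp only [Pi.add_apply, Pi.neg_apply, Pi.smul_apply, Pi.mul_apply, smul_eq_mul, nsmul_eq_mul, Nat.cast_ofNat, Pi.ofNat_apply,
            e_ne (show (Sum.inl i : Cnt) ≠ Sum.inl (j-1) by simp; omega),
            e_ne (show (Sum.inl i : Cnt) ≠ Sum.inr (j-1) by simp)] at e1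
          have e2 := hv (Sum.inr i)
          simp only [Pi.add_apply, Pi.neg_apply, Pi.smul_apply, Pi.mul_apply, smul_eq_mul, nsmul_eq_mul, Nat.cast_ofNat, Pi.ofNat_apply,
            e_ne (show (Sum.inr i : Cnt) ≠ Sum.inl (j-1) by simp),
            e_ne (show (Sum.inr i : Cnt) ≠ Sum.inr (j-1) by simp; omega)] at e2
          have := hz i h1 h2
          constructor <;> omega
        have hclaim := (IH hval hcov' hz').2.1 hq'
        have ea' : t.root.2 (Sum.inl (j-1)) + 1 = c.2 (Sum.inl (j-1)) := by omega
        have eb' : t.root.2 (Sum.inr (j-1)) = c.2 (Sum.inr (j-1)) + 2 := by omega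
        have en' : t.root.2 (Sum.inl j) = c.2 (Sum.inl j) := by omega
        rw [eb', en'] at hclaim
        refine le_trans (Nat.pow_le_pow_right (by norm_num) ?_) hclaim
        omega
      · -- q1 → q2
        subst hu
        have heq : ∀ i, t.root.2 i = c.2 i := by
          intro i; have := hv i; simp only [Pi.zero_apply, add_zero] at this; omega
        have hz' : ∀ i, 1 ≤ i → i + 2 ≤ j →
            t.root.2 (Sum.inl i) = 0 ∧ t.root.2 (Sum.inr i) = 0 := by
          intro i h1 h2; rw [heq, heq]; exact hz i h1 h2
        have hclaim := (IH hval hcov' hz').2.2 hq'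
        rw [heq, heq, heq] at hclaim
        refine le_trans (Nat.pow_le_pow_right (by norm_num) ?_) hclaim
        omega
    · -- q2 j
      intro hq
      show 2 ^ (tower (j-1) + 1 - (c.2 (Sum.inl (j-1)) + c.2 (Sum.inr (j-1)) + 1)/2) ≤
        c.2 (Sum.inl j)
      rw [show (DTree.node1 c t).root.1 = c.1 from rfl] at hq
      rw [hq] at hu
      obtain ⟨hq', hu⟩ := inv_q2 hu
      subst hu
      have ea := hv (Sum.inl (j-1))
      simp only [Pi.add_apply, Pi.neg_apply, e_same, e_ne hne_lr] at ea
      have eb := hv (Sum.inr (j-1))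
      simp only [Pi.add_apply, Pi.neg_apply, e_same, e_ne hne_rl] at eb
      have en := hv (Sum.inl j)
      simp only [Pi.add_apply, Pi.neg_apply, e_ne hne_jl, e_ne hne_jr] at en
      have hz' : ∀ i, 1 ≤ i → i + 2 ≤ j →
          t.root.2 (Sum.inl i) = 0 ∧ t.root.2 (Sum.inr i) = 0 := by
        intro i h1 h2
        have e1 := hv (Sum.inl i)
        simp only [Pi.add_apply, Pi.neg_apply,
          e_ne (show (Sum.inl i : Cnt) ≠ Sum.inl (j-1) by simp; omega),
          e_ne (show (Sum.inl i : Cnt) ≠ Sum.inr (j-1) by simp)] at e1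
        have e2 := hv (Sum.inr i)
        simp only [Pi.add_apply, Pi.neg_apply,
          e_ne (show (Sum.inr i : Cnt) ≠ Sum.inl (j-1) by simp),
          e_ne (show (Sum.inr i : Cnt) ≠ Sum.inr (j-1) by simp; omega)] at e2
        have := hz i h1 h2
        constructor <;> omega
      have hclaim := (IH hval hcov' hz').2.2 hq'
      have ea' : t.root.2 (Sum.inl (j-1)) = c.2 (Sum.inl (j-1)) + 1 := by omega
      have eb' : t.root.2 (Sum.inr (j-1)) + 1 = c.2 (Sum.inr (j-1)) := by omega
      have en' : t.root.2 (Sum.inl j) = c.2 (Sum.inl j) := by omega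
      rw [ea', en'] at hclaim
      refine le_trans (Nat.pow_le_pow_right (by norm_num) ?_) hclaim
      omega
  | node2 c t₁ t₂ IH₁ IH₂ =>
    intro hD hcov hz
    simp only [DTree.root] at hz
    cases hD with | two hstep hval₁ hval₂ =>
    obtain ⟨m, hm2, hmk, hcm, h1m, h2m, hvv⟩ := bin_split hstep
    have hcov₁ : ∀ l ∈ t₁.leaves, l.1 = BSt.qleaf := by
      intro l hl; exact hcov l (by simp [DTree.leaves]; exact Or.inl hl)
    have hcov₂ : ∀ l ∈ t₂.leaves, l.1 = BSt.qleaf := by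
      intro l hl; exact hcov l (by simp [DTree.leaves]; exact Or.inr hl)
    refine ⟨?_, ?_, ?_⟩
    · rintro (hq | hq) <;>
        (rw [show (DTree.node2 c t₁ t₂).root.1 = c.1 from rfl] at hq; rw [hq] at hcm;
          simp at hcm)
    · intro hq
      rw [show (DTree.node2 c t₁ t₂).root.1 = c.1 from rfl] at hq; rw [hq] at hcm
      simp at hcm
    · intro hq
      rw [show (DTree.node2 c t₁ t₂).root.1 = c.1 from rfl] at hq; rw [hq] at hcm
      rw [BSt.q2.injEq] at hcm; subst hcm
      show 2 ^ (tower (j-1) + 1 - (c.2 (Sum.inl (j-1)) + c.2 (Sum.inr (j-1)) + 1)/2) ≤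
        c.2 (Sum.inl j)
      have hz₁ : ∀ i, 1 ≤ i → i + 2 ≤ j →
          t₁.root.2 (Sum.inl i) = 0 ∧ t₁.root.2 (Sum.inr i) = 0 := by
        intro i h1 h2
        have := hz i h1 h2
        have u1 := hvv (Sum.inl i); have u2 := hvv (Sum.inr i)
        constructor <;> omega
      have hz₂ : ∀ i, 1 ≤ i → i + 2 ≤ j →
          t₂.root.2 (Sum.inl i) = 0 ∧ t₂.root.2 (Sum.inr i) = 0 := by
        intro i h1 h2
        have := hz i h1 h2
        have u1 := hvv (Sum.inl i); have u2 := hvv (Sum.inr i)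
        constructor <;> omega
      have hc₁ := (IH₁ hval₁ hcov₁ hz₁).1 (Or.inr h1m)
      have hc₂ := (IH₂ hval₂ hcov₂ hz₂).1 (Or.inr h2m)
      have s1 := hvv (Sum.inl (j-1))
      have s2 := hvv (Sum.inr (j-1))
      have s3 := hvv (Sum.inl j)
      calc 2 ^ (tower (j-1) + 1 - (c.2 (Sum.inl (j-1)) + c.2 (Sum.inr (j-1)) + 1)/2)
          = 2 ^ (tower (j-1) + 1 -
              ((t₁.root.2 (Sum.inl (j-1)) + t₁.root.2 (Sum.inr (j-1))) +
               (t₂.root.2 (Sum.inl (j-1)) + t₂.root.2 (Sum.inr (j-1))) + 1)/2) := by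
            congr 2; omega
        _ ≤ 2 ^ (tower (j-1) - (t₁.root.2 (Sum.inl (j-1)) + t₁.root.2 (Sum.inr (j-1)))) +
            2 ^ (tower (j-1) - (t₂.root.2 (Sum.inl (j-1)) + t₂.root.2 (Sum.inr (j-1)))) :=
            pow2_split _ _ _
        _ ≤ t₁.root.2 (Sum.inl j) + t₂.root.2 (Sum.inl j) := Nat.add_le_add hc₁ hc₂
        _ = c.2 (Sum.inl j) := by omega

/-- A good node: a `qloop k` node with small `d_{k-1} + d'_{k-1}`, whose
subtree is a covering deduction with zero low counters. -/
def Good (k h : ℕ) (t : DTree BSt Cnt) : Prop :=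
  IsDeduction (Bsys k) t ∧ (∀ l ∈ t.leaves, l.1 = BSt.qleaf) ∧
  (∀ i, 1 ≤ i → i + 2 ≤ k → t.root.2 (Sum.inl i) = 0 ∧ t.root.2 (Sum.inr i) = 0) ∧
  t.root.1 = BSt.qloop k ∧
  t.root.2 (Sum.inl (k-1)) + t.root.2 (Sum.inr (k-1)) ≤ h

lemma main_aux {k : ℕ} (hk2 : 2 ≤ k) (h : ℕ) (hh : 1 ≤ h) (hle : h ≤ tower (k-1)) :
    ∀ t : DTree BSt Cnt, IsDeduction (Bsys k) t → (∀ l ∈ t.leaves, l.1 = BSt.qleaf) →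
    (∀ i, 1 ≤ i → i + 2 ≤ k → t.root.2 (Sum.inl i) = 0 ∧ t.root.2 (Sum.inr i) = 0) →
    (((t.root.1 = BSt.qinit k ∨ t.root.1 = BSt.qloop k) ∧
        t.root.2 (Sum.inl (k-1)) + t.root.2 (Sum.inr (k-1)) + 1 ≤ h) ∨
     (t.root.1 = BSt.q1 k ∧
        2 * t.root.2 (Sum.inl (k-1)) + t.root.2 (Sum.inr (k-1)) ≤ 2*h) ∨
     (t.root.1 = BSt.q2 k ∧
        t.root.2 (Sum.inl (k-1)) + t.root.2 (Sum.inr (k-1)) ≤ 2*h)) →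
    ∃ p₁ p₂ t₁ t₂, Incomparable p₁ p₂ ∧
      subtreeAt t p₁ = some t₁ ∧ subtreeAt t p₂ = some t₂ ∧ Good k h t₁ ∧ Good k h t₂ := by
  intro t
  induction t with
  | leaf c =>
    intro hD hcov hz hcase
    have hc : c.1 = BSt.qleaf := hcov c (by simp [DTree.leaves])
    simp only [DTree.root] at hcase
    rcases hcase with ⟨hq | hq, -⟩ | ⟨hq, -⟩ | ⟨hq, -⟩ <;> (rw [hc] at hq; simp at hq)
  | node1 c t IH =>
    intro hD hcov hz hcase
    cases hD with | one hstep hval =>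
    obtain ⟨u, hu, hv⟩ := tu_unary hstep
    have hcov' : ∀ l ∈ t.leaves, l.1 = BSt.qleaf := hcov
    simp only [DTree.root] at hz hcase
    have hne_jl : (Sum.inl k : Cnt) ≠ Sum.inl (k-1) := by simp; omega
    have hne_jr : (Sum.inl k : Cnt) ≠ Sum.inr (k-1) := by simp
    have hne_rl : (Sum.inr (k-1) : Cnt) ≠ Sum.inl (k-1) := by simp
    have hne_lr : (Sum.inl (k-1) : Cnt) ≠ Sum.inr (k-1) := by simp
    rcases hcase with ⟨hq | hq, hb⟩ | ⟨hq, hb⟩ | ⟨hq, hb⟩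
    · -- qinit k → q1 k
      rw [hq] at hu
      obtain ⟨-, hq', hu⟩ := inv_init hk2 hu
      subst hu
      have ea := hv (Sum.inl (k-1)); rw [e_same] at ea
      have eb := hv (Sum.inr (k-1)); rw [e_ne hne_rl] at eb
      have hz' : ∀ i, 1 ≤ i → i + 2 ≤ k →
          t.root.2 (Sum.inl i) = 0 ∧ t.root.2 (Sum.inr i) = 0 := by
        intro i h1 h2
        have e1 := hv (Sum.inl i)
        rw [e_ne (show (Sum.inl i : Cnt) ≠ Sum.inl (k-1) by simp; omega)] at e1
        have e2 := hv (Sum.inr i)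
        rw [e_ne (show (Sum.inr i : Cnt) ≠ Sum.inl (k-1) by simp)] at e2
        have := hz i h1 h2
        constructor <;> omega
      obtain ⟨p₁, p₂, t₁, t₂, hinc, hs₁, hs₂, g₁, g₂⟩ :=
        IH hval hcov' hz' (Or.inr (Or.inl ⟨hq', by omega⟩))
      exact ⟨false :: p₁, false :: p₂, t₁, t₂, incomp_cons false hinc, hs₁, hs₂, g₁, g₂⟩
    · -- qloop k
      rw [hq] at hu
      rcases inv_qloop hu with ⟨hq', hu⟩ | ⟨hq', hu⟩
      · -- restart
        subst hu
        have heq : ∀ i, t.root.2 i = c.2 i := by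
          intro i; have := hv i; simp only [Pi.zero_apply, add_zero] at this; omega
        have hz' : ∀ i, 1 ≤ i → i + 2 ≤ k →
            t.root.2 (Sum.inl i) = 0 ∧ t.root.2 (Sum.inr i) = 0 := by
          intro i h1 h2; rw [heq, heq]; exact hz i h1 h2
        obtain ⟨p₁, p₂, t₁, t₂, hinc, hs₁, hs₂, g₁, g₂⟩ :=
          IH hval hcov' hz' (Or.inl ⟨Or.inl hq', by rw [heq, heq]; omega⟩)
        exact ⟨false :: p₁, false :: p₂, t₁, t₂, incomp_cons false hinc, hs₁, hs₂, g₁, g₂⟩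
      · -- descend: impossible since the budget is too small
        exfalso
        subst hu
        have ea := hv (Sum.inl (k-1))
        simp only [Pi.neg_apply, e_ne (Ne.symm hne_jl), neg_zero, add_zero] at ea
        have eb := hv (Sum.inr (k-1))
        simp only [Pi.neg_apply, e_ne (Ne.symm hne_jr), neg_zero, add_zero] at eb
        have hage : tower (k-1) ≤ t.root.2 (Sum.inl (k-1)) := by
          rcases Nat.lt_or_ge k 3 with h3 | h3
          · have hk : k = 2 := by omega
            subst hk
            have := L1 t hval hcov' hq'
            simpa [tower] using this
          · have hz'' : ∀ i, 1 ≤ i → i + 2 ≤ k - 1 →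
                t.root.2 (Sum.inl i) = 0 ∧ t.root.2 (Sum.inr i) = 0 := by
              intro i h1 h2
              have e1 := hv (Sum.inl i)
              simp only [Pi.neg_apply,
                e_ne (show (Sum.inl i : Cnt) ≠ Sum.inl k by simp; omega),
                neg_zero, add_zero] at e1
              have e2 := hv (Sum.inr i)
              simp only [Pi.neg_apply,
                e_ne (show (Sum.inr i : Cnt) ≠ Sum.inl k by simp),
                neg_zero, add_zero] at e2
              have := hz i h1 (by omega)
              constructor <;> omega
            have hclaim := (budget (k-1) (by omega) (by omega) t hval hcov' hz'').1
              (Or.inl hq')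
            have z1 := hv (Sum.inl (k-2))
            simp only [Pi.neg_apply,
              e_ne (show (Sum.inl (k-2) : Cnt) ≠ Sum.inl k by simp; omega),
              neg_zero, add_zero] at z1
            have z2 := hv (Sum.inr (k-2))
            simp only [Pi.neg_apply,
              e_ne (show (Sum.inr (k-2) : Cnt) ≠ Sum.inl k by simp),
              neg_zero, add_zero] at z2
            have hz2 := hz (k-2) (by omega) (by omega)
            rw [show k - 1 - 1 = k - 2 by omega] at hclaim
            have w1 : t.root.2 (Sum.inl (k-2)) = 0 := by omega
            have w2 : t.root.2 (Sum.inr (k-2)) = 0 := by omega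
            rw [w1, w2] at hclaim
            simp only [Nat.add_zero, Nat.sub_zero] at hclaim
            have htw : tower (k-1) = 2 ^ (tower (k-2)) := by
              rw [show k - 1 = (k - 2) + 1 by omega]
              rfl
            rw [htw]
            exact hclaim
        omega
    · -- q1 k
      rw [hq] at hu
      rcases inv_q1 hu with ⟨hq', hu⟩ | ⟨hq', hu⟩
      · -- q1 loop
        subst hu
        have ea := hv (Sum.inl (k-1))
        simp only [Pi.add_apply, Pi.neg_apply, Pi.smul_apply, Pi.mul_apply, smul_eq_mul,
          nsmul_eq_mul, Nat.cast_ofNat, Pi.ofNat_apply, e_same, e_ne hne_lr] at ea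
        have eb := hv (Sum.inr (k-1))
        simp only [Pi.add_apply, Pi.neg_apply, Pi.smul_apply, Pi.mul_apply, smul_eq_mul,
          nsmul_eq_mul, Nat.cast_ofNat, Pi.ofNat_apply, e_same, e_ne hne_rl] at eb
        have hz' : ∀ i, 1 ≤ i → i + 2 ≤ k →
            t.root.2 (Sum.inl i) = 0 ∧ t.root.2 (Sum.inr i) = 0 := by
          intro i h1 h2
          have e1 := hv (Sum.inl i)
          simp only [Pi.add_apply, Pi.neg_apply, Pi.smul_apply, Pi.mul_apply, smul_eq_mul,
            nsmul_eq_mul, Nat.cast_ofNat, Pi.ofNat_apply,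
            e_ne (show (Sum.inl i : Cnt) ≠ Sum.inl (k-1) by simp; omega),
            e_ne (show (Sum.inl i : Cnt) ≠ Sum.inr (k-1) by simp)] at e1
          have e2 := hv (Sum.inr i)
          simp only [Pi.add_apply, Pi.neg_apply, Pi.smul_apply, Pi.mul_apply, smul_eq_mul,
            nsmul_eq_mul, Nat.cast_ofNat, Pi.ofNat_apply,
            e_ne (show (Sum.inr i : Cnt) ≠ Sum.inl (k-1) by simp),
            e_ne (show (Sum.inr i : Cnt) ≠ Sum.inr (k-1) by simp; omega)] at e2
          have := hz i h1 h2
          constructor <;> omega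
        obtain ⟨p₁, p₂, t₁, t₂, hinc, hs₁, hs₂, g₁, g₂⟩ :=
          IH hval hcov' hz' (Or.inr (Or.inl ⟨hq', by omega⟩))
        exact ⟨false :: p₁, false :: p₂, t₁, t₂, incomp_cons false hinc, hs₁, hs₂, g₁, g₂⟩
      · -- q1 → q2
        subst hu
        have heq : ∀ i, t.root.2 i = c.2 i := by
          intro i; have := hv i; simp only [Pi.zero_apply, add_zero] at this; omega
        have hz' : ∀ i, 1 ≤ i → i + 2 ≤ k →
            t.root.2 (Sum.inl i) = 0 ∧ t.root.2 (Sum.inr i) = 0 := by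
          intro i h1 h2; rw [heq, heq]; exact hz i h1 h2
        obtain ⟨p₁, p₂, t₁, t₂, hinc, hs₁, hs₂, g₁, g₂⟩ :=
          IH hval hcov' hz' (Or.inr (Or.inr ⟨hq', by rw [heq, heq]; omega⟩))
        exact ⟨false :: p₁, false :: p₂, t₁, t₂, incomp_cons false hinc, hs₁, hs₂, g₁, g₂⟩
    · -- q2 k
      rw [hq] at hu
      obtain ⟨hq', hu⟩ := inv_q2 hu
      subst hu
      have ea := hv (Sum.inl (k-1))
      simp only [Pi.add_apply, Pi.neg_apply, e_same, e_ne hne_lr] at ea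
      have eb := hv (Sum.inr (k-1))
      simp only [Pi.add_apply, Pi.neg_apply, e_same, e_ne hne_rl] at eb
      have hz' : ∀ i, 1 ≤ i → i + 2 ≤ k →
          t.root.2 (Sum.inl i) = 0 ∧ t.root.2 (Sum.inr i) = 0 := by
        intro i h1 h2
        have e1 := hv (Sum.inl i)
        simp only [Pi.add_apply, Pi.neg_apply,
          e_ne (show (Sum.inl i : Cnt) ≠ Sum.inl (k-1) by simp; omega),
          e_ne (show (Sum.inl i : Cnt) ≠ Sum.inr (k-1) by simp)] at e1
        have e2 := hv (Sum.inr i)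
        simp only [Pi.add_apply, Pi.neg_apply,
          e_ne (show (Sum.inr i : Cnt) ≠ Sum.inl (k-1) by simp),
          e_ne (show (Sum.inr i : Cnt) ≠ Sum.inr (k-1) by simp; omega)] at e2
        have := hz i h1 h2
        constructor <;> omega
      obtain ⟨p₁, p₂, t₁, t₂, hinc, hs₁, hs₂, g₁, g₂⟩ :=
        IH hval hcov' hz' (Or.inr (Or.inr ⟨hq', by omega⟩))
      exact ⟨false :: p₁, false :: p₂, t₁, t₂, incomp_cons false hinc, hs₁, hs₂, g₁, g₂⟩
  | node2 c t₁ t₂ IH₁ IH₂ =>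
    intro hD hcov hz hcase
    cases hD with | two hstep hval₁ hval₂ =>
    obtain ⟨m, hm2, hmk, hcm, h1m, h2m, hvv⟩ := bin_split hstep
    simp only [DTree.root] at hz hcase
    have hcov₁ : ∀ l ∈ t₁.leaves, l.1 = BSt.qleaf := by
      intro l hl; exact hcov l (by simp [DTree.leaves]; exact Or.inl hl)
    have hcov₂ : ∀ l ∈ t₂.leaves, l.1 = BSt.qleaf := by
      intro l hl; exact hcov l (by simp [DTree.leaves]; exact Or.inr hl)
    rcases hcase with ⟨hq | hq, -⟩ | ⟨hq, -⟩ | ⟨hq, hb⟩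
    · rw [hq] at hcm; simp at hcm
    · rw [hq] at hcm; simp at hcm
    · rw [hq] at hcm; simp at hcm
    · rw [hq] at hcm
      rw [BSt.q2.injEq] at hcm
      subst hcm
      have hz₁ : ∀ i, 1 ≤ i → i + 2 ≤ k →
          t₁.root.2 (Sum.inl i) = 0 ∧ t₁.root.2 (Sum.inr i) = 0 := by
        intro i h1 h2
        have := hz i h1 h2
        have u1 := hvv (Sum.inl i); have u2 := hvv (Sum.inr i)
        constructor <;> omega
      have hz₂ : ∀ i, 1 ≤ i → i + 2 ≤ k →
          t₂.root.2 (Sum.inl i) = 0 ∧ t₂.root.2 (Sum.inr i) = 0 := by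
        intro i h1 h2
        have := hz i h1 h2
        have u1 := hvv (Sum.inl i); have u2 := hvv (Sum.inr i)
        constructor <;> omega
      have s1 := hvv (Sum.inl (k-1))
      have s2 := hvv (Sum.inr (k-1))
      by_cases hc1 : t₁.root.2 (Sum.inl (k-1)) + t₁.root.2 (Sum.inr (k-1)) ≤ h
      · by_cases hc2 : t₂.root.2 (Sum.inl (k-1)) + t₂.root.2 (Sum.inr (k-1)) ≤ h
        · exact ⟨[false], [true], t₁, t₂, incomp_singletons, by simp [subtreeAt], by simp [subtreeAt],
            ⟨hval₁, hcov₁, hz₁, h1m, hc1⟩, ⟨hval₂, hcov₂, hz₂, h2m, hc2⟩⟩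
        · obtain ⟨p₁, p₂, s₁, s₂, hinc, hs₁, hs₂, g₁, g₂⟩ :=
            IH₁ hval₁ hcov₁ hz₁ (Or.inl ⟨Or.inr h1m, by omega⟩)
          exact ⟨false :: p₁, false :: p₂, s₁, s₂, incomp_cons false hinc, hs₁, hs₂, g₁, g₂⟩
      · obtain ⟨p₁, p₂, s₁, s₂, hinc, hs₁, hs₂, g₁, g₂⟩ :=
          IH₂ hval₂ hcov₂ hz₂ (Or.inl ⟨Or.inr h2m, by omega⟩)
        exact ⟨true :: p₁, true :: p₂, s₁, s₂, incomp_cons true hinc, hs₁, hs₂, g₁, g₂⟩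

lemma incomp_symm {p q : List Bool} (h : Incomparable p q) : Incomparable q p := ⟨h.2, h.1⟩

lemma outer {k : ℕ} (hk2 : 2 ≤ k) (D : DTree BSt Cnt) (hD : IsDeduction (Bsys k) D)
    (hcov : ∀ l ∈ D.leaves, l.1 = BSt.qleaf)
    (hz : ∀ i, 1 ≤ i → i + 2 ≤ k → D.root.2 (Sum.inl i) = 0 ∧ D.root.2 (Sum.inr i) = 0)
    (hq : D.root.1 = BSt.qinit k)
    (hz0 : D.root.2 (Sum.inl (k-1)) = 0 ∧ D.root.2 (Sum.inr (k-1)) = 0) :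
    ∀ h, 1 ≤ h → h ≤ tower (k-1) →
    ∃ S : Finset (List Bool), S.card = 2 ^ h ∧
      (∀ p₁ ∈ S, ∀ p₂ ∈ S, p₁ ≠ p₂ → Incomparable p₁ p₂) ∧
      ∀ p ∈ S, ∃ t, subtreeAt D p = some t ∧ Good k h t := by
  intro h
  induction h with
  | zero => omega
  | succ n IH =>
    intro _ hle
    rcases Nat.eq_zero_or_pos n with hn | hn
    · subst hn
      obtain ⟨p₁, p₂, t₁, t₂, hinc, hs₁, hs₂, g₁, g₂⟩ :=
        main_aux hk2 1 le_rfl (by omega) D hD hcov hz (Or.inl ⟨Or.inl hq, by omega⟩)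
      refine ⟨{p₁, p₂}, ?_, ?_, ?_⟩
      · rw [Finset.card_insert_of_notMem (by simp [incomp_ne hinc]),
          Finset.card_singleton]
        norm_num
      · intro a ha b hb hne
        simp only [Finset.mem_insert, Finset.mem_singleton] at ha hb
        rcases ha with rfl | rfl <;> rcases hb with rfl | rfl
        · exact absurd rfl hne
        · exact hinc
        · exact incomp_symm hinc
        · exact absurd rfl hne
      · intro p hp
        simp only [Finset.mem_insert, Finset.mem_singleton] at hp
        rcases hp with rfl | rfl
        · exact ⟨t₁, hs₁, g₁⟩
        · exact ⟨t₂, hs₂, g₂⟩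
    · obtain ⟨S, hcard, hpair, hmem⟩ := IH hn (by omega)
      have HC : ∀ p, ∃ q₁ q₂ : List Bool, p ∈ S →
          Incomparable q₁ q₂ ∧
          (∃ t₁, subtreeAt D (p ++ q₁) = some t₁ ∧ Good k (n+1) t₁) ∧
          (∃ t₂, subtreeAt D (p ++ q₂) = some t₂ ∧ Good k (n+1) t₂) := by
        intro p
        by_cases hp : p ∈ S
        · obtain ⟨t, hst, hDt, hcovt, hzt, hqt, hvt⟩ := hmem p hp
          obtain ⟨q₁, q₂, t₁, t₂, hinc, hs₁, hs₂, g₁, g₂⟩ :=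
            main_aux hk2 (n+1) (by omega) hle t hDt hcovt hzt
              (Or.inl ⟨Or.inr hqt, by omega⟩)
          refine ⟨q₁, q₂, fun _ => ⟨hinc, ⟨t₁, ?_, g₁⟩, ⟨t₂, ?_, g₂⟩⟩⟩
          · rw [subtreeAt_append, hst]
            exact hs₁
          · rw [subtreeAt_append, hst]
            exact hs₂
        · exact ⟨[], [], fun hps => absurd hps hp⟩
      choose f₁ f₂ hf using HC
      have hdisj : ∀ p ∈ S, ∀ q ∈ S, p ≠ q →
          Disjoint ({p ++ f₁ p, p ++ f₂ p} : Finset (List Bool))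
            ({q ++ f₁ q, q ++ f₂ q} : Finset (List Bool)) := by
        intro p hp q hq hne
        rw [Finset.disjoint_left]
        intro a ha ha'
        simp only [Finset.mem_insert, Finset.mem_singleton] at ha ha'
        have hinc := incomp_append₂ (hpair p hp q hq hne)
          (q := f₁ p) (q' := f₁ q)
        rcases ha with rfl | rfl <;> rcases ha' with h' | h' <;>
          exact incomp_ne (incomp_append₂ (hpair p hp q hq hne)) h'
      refine ⟨S.biUnion (fun p => {p ++ f₁ p, p ++ f₂ p}), ?_, ?_, ?_⟩
      · rw [Finset.card_biUnion hdisj]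
        have hpc : ∀ p ∈ S, ({p ++ f₁ p, p ++ f₂ p} : Finset (List Bool)).card = 2 := by
          intro p hp
          rw [Finset.card_insert_of_notMem, Finset.card_singleton]
          simp only [Finset.mem_singleton]
          intro hcontra
          exact incomp_ne (hf p hp).1 (List.append_cancel_left hcontra)
        rw [Finset.sum_congr rfl hpc, Finset.sum_const, hcard, smul_eq_mul]
        rw [pow_succ]
      · intro a ha b hb hne
        simp only [Finset.mem_biUnion, Finset.mem_insert, Finset.mem_singleton] at ha hb
        obtain ⟨p, hp, hap⟩ := ha
        obtain ⟨q, hq, hbq⟩ := hb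
        by_cases hpq : p = q
        · subst hpq
          have hi := (hf p hp).1
          rcases hap with rfl | rfl <;> rcases hbq with rfl | rfl
          · exact absurd rfl hne
          · exact incomp_append₁ p hi
          · exact incomp_symm (incomp_append₁ p hi)
          · exact absurd rfl hne
        · rcases hap with rfl | rfl <;> rcases hbq with rfl | rfl <;>
            exact incomp_append₂ (hpair p hp q hq hpq)
      · intro a ha
        simp only [Finset.mem_biUnion, Finset.mem_insert, Finset.mem_singleton] at ha
        obtain ⟨p, hp, hap⟩ := ha
        obtain ⟨-, h1, h2⟩ := hf p hp
        rcases hap with rfl | rfl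
        · exact h1
        · exact h2

end BkAux

/-- Let `k > 1` and `D` be a `(qinit k, v₀)`-rooted `{qleaf}`-leaf-covering
deduction tree of `B_k`, with `v₀ (d_i) = v₀ (d'_i) = 0` for `1 ≤ i < k`.
Then for each `0 < h ≤ tower (k-1)`, `D` contains `2^h` pairwise
incomparable nodes with state label `qloop k` at which `d_{k-1} + d'_{k-1}`
is at most `h`. -/
theorem Bk_incomparable_nodes (k : ℕ) (hk : 1 < k) (v₀ : Cnt → ℕ)
    (h0 : ∀ i, 1 ≤ i → i < k → v₀ (Sum.inl i) = 0 ∧ v₀ (Sum.inr i) = 0)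
    (D : DTree BSt Cnt) (hD : IsDeduction (Bsys k) D)
    (hroot : D.root = (BSt.qinit k, v₀))
    (hcov : ∀ l ∈ D.leaves, l.1 = BSt.qleaf)
    (h : ℕ) (hpos : 0 < h) (hle : h ≤ tower (k - 1)) :
    ∃ S : Finset (List Bool), S.card = 2 ^ h ∧
      (∀ p₁ ∈ S, ∀ p₂ ∈ S, p₁ ≠ p₂ → Incomparable p₁ p₂) ∧
      ∀ p ∈ S, ∃ t : DTree BSt Cnt, subtreeAt D p = some t ∧
        t.root.1 = BSt.qloop k ∧
        t.root.2 (Sum.inl (k - 1)) + t.root.2 (Sum.inr (k - 1)) ≤ h := by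
  have hk2 : 2 ≤ k := hk
  have hq : D.root.1 = BSt.qinit k := by rw [hroot]
  have hv : D.root.2 = v₀ := by rw [hroot]
  have hz : ∀ i, 1 ≤ i → i + 2 ≤ k →
      D.root.2 (Sum.inl i) = 0 ∧ D.root.2 (Sum.inr i) = 0 := by
    intro i h1 h2; rw [hv]; exact h0 i h1 (by omega)
  have hz0 : D.root.2 (Sum.inl (k-1)) = 0 ∧ D.root.2 (Sum.inr (k-1)) = 0 := by
    rw [hv]; exact h0 (k-1) (by omega) (by omega)
  obtain ⟨S, hcard, hpair, hmem⟩ := outer hk2 D hD hcov hz hq hz0 h hpos hle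
  refine ⟨S, hcard, hpair, ?_⟩
  intro p hp
  obtain ⟨t, hst, -, -, -, hqt, hvt⟩ := hmem p hp
  exact ⟨t, hst, hqt, hvt⟩
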